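/- Let U be an n×m matrix and λ ∈ ℝ^m nonnegative with λ_j = 0 for some index j. If the columns of U are linearly dependent in a way involving only indices where λ vanishes (i.e., there is a nonzero vector v in the kernel of U supported on {j : λ_j = 0}), then the maximizer of η ↦ -(Y - Uη)ᵀ(Y - Uη) - ηᵀ diag(λ) η is not unique. -/
import Mathlib


open Matrix

theorem stmt2 (n m : ℕ) (U : Matrix (Fin n) (Fin m) ℝ) (Y : Fin n → ℝ)
    (lam : Fin m → ℝ) (hlam : ∀ j, 0 ≤ lam j) (v : Fin m → ℝ) (hv : v ≠ 0)
    (hker : U.mulVec v = 0) (hsupp : ∀ j, lam j ≠ 0 → v j = 0) :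
    let f : (Fin m → ℝ) → ℝ := fun η =>
      -((Y - U.mulVec η) ⬝ᵥ (Y - U.mulVec η)) - η ⬝ᵥ (Matrix.diagonal lam).mulVec η
    ∀ η, (∀ η', f η' ≤ f η) → ((∀ η', f η' ≤ f (η + v)) ∧ η + v ≠ η) := by
  intro f η hmax
  have hDv : (Matrix.diagonal lam).mulVec v = 0 := by
    funext j
    simp only [mulVec_diagonal, Pi.zero_apply]
    by_cases h : lam j = 0
    · simp [h]
    · simp [hsupp j h]
  have hfeq : f (η + v) = f η := by
    show -((Y - U.mulVec (η + v)) ⬝ᵥ (Y - U.mulVec (η + v))) -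
      (η + v) ⬝ᵥ (Matrix.diagonal lam).mulVec (η + v) = _
    have h1 : U.mulVec (η + v) = U.mulVec η := by
      rw [mulVec_add, hker, add_zero]
    have h2 : (Matrix.diagonal lam).mulVec (η + v) = (Matrix.diagonal lam).mulVec η := by
      rw [mulVec_add, hDv, add_zero]
    rw [h1, h2, add_dotProduct]
    have h3 : v ⬝ᵥ (Matrix.diagonal lam).mulVec η = 0 := by
      simp only [dotProduct, mulVec_diagonal]
      apply Finset.sum_eq_zero
      intro j _
      by_cases h : lam j = 0
      · simp [h]
      · simp [hsupp j h]
    rw [h3, add_zero]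
  constructor
  · intro η'
    rw [hfeq]; exact hmax η'
  · intro h
    apply hv
    have := congrArg (· - η) h
    simpa using this
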